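/- arXiv:2009.11338 — 3 statements merged into one kernel-verified Lean document; each statement's English description precedes it below -/
import Mathlib

section
/- Let C be an axis-aligned cube in ℝⁿ and S₁, S₂ ⊆ C two axis-disjoint measurable subsets with S₃ = C \ (S₁ ∪ S₂). Then vol(S₃) ≥ (c / (n log n)) · min{vol(S₁), vol(S₂)} for an absolute constant c > 0. -/
open MeasureTheory Set
open scoped ENNReal

/-- Two sets are axis-disjoint: no axis-parallel line meets both, i.e. any point of the
first and any point of the second differ in at least two coordinates. -/
def AxisDisjoint {n : ℕ} (S₁ S₂ : Set (Fin n → ℝ)) : Prop :=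
  ∀ p ∈ S₁, ∀ q ∈ S₂, ¬∃ i : Fin n, ∀ j ≠ i, p j = q j

open Function in
/-- Loomis–Whitney / grid-lines type bound: if every axis-parallel segment of the cube
through a point of `U` stays in `U ∪ W`, then `vol U · L^{n/(n-1)} ≤ (vol U + vol W)^{n/(n-1)}`. -/
lemma gridlines_bound {n : ℕ} (hn : 2 ≤ n) (y : Fin n → ℝ) (r : ℝ) (hr : 0 < r)
    (U W : Set (Fin n → ℝ)) (hU : MeasurableSet U) (hW : MeasurableSet W)
    (hUW : Disjoint U W)
    (hline : ∀ x ∈ U, ∀ i : Fin n, ∀ t : ℝ, |t - y i| ≤ r → Function.update x i t ∈ U ∪ W) :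
    volume U * (ENNReal.ofReal (2*r)) ^ ((n : ℝ)/((n:ℝ)-1)) ≤
      (volume U + volume W) ^ ((n:ℝ)/((n:ℝ)-1)) := by
  classical
  set f : (Fin n → ℝ) → ℝ≥0∞ := (U ∪ W).indicator 1 with hf_def
  have hf : Measurable f := measurable_one.indicator (hU.union hW)
  have hn1 : (1:ℝ) < n := by exact_mod_cast hn.trans_lt' one_lt_two
  have hp : Real.HolderConjugate (Fintype.card (Fin n)) ((n:ℝ)/((n:ℝ)-1)) := by
    rw [Fintype.card_fin]
    exact Real.HolderConjugate.conjExponent hn1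
  have key := MeasureTheory.lintegral_prod_lintegral_pow_le
    (fun _ : Fin n => (volume : Measure ℝ)) hp hf
  rw [← volume_pi] at key
  simp only [Fintype.card_fin] at key
  have hRHS : ∫⁻ x, f x = volume U + volume W := by
    rw [hf_def, lintegral_indicator_one (hU.union hW), measure_union hUW hW]
  -- lower bound the LHS
  have hq0 : (0:ℝ) ≤ 1/((n:ℝ)-1) := div_nonneg zero_le_one (by linarith)
  have hLB : volume U * (ENNReal.ofReal (2*r)) ^ ((n : ℝ)/((n:ℝ)-1)) ≤
      ∫⁻ x, ∏ i, (∫⁻ t, f (update x i t)) ^ ((1:ℝ)/((n:ℝ) - 1)) := by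
    have hle : ∀ x, U.indicator (fun _ => (ENNReal.ofReal (2*r)) ^ ((n : ℝ)/((n:ℝ)-1))) x ≤
        ∏ i, (∫⁻ t, f (update x i t)) ^ ((1:ℝ)/((n:ℝ) - 1)) := by
      intro x
      by_cases hx : x ∈ U
      · rw [Set.indicator_of_mem hx]
        have hfac : ∀ i : Fin n, ENNReal.ofReal (2*r) ≤ ∫⁻ t, f (update x i t) := by
          intro i
          have : ∀ t : ℝ, (Icc (y i - r) (y i + r)).indicator (1 : ℝ → ℝ≥0∞) t ≤
              f (update x i t) := by
            intro t
            by_cases ht : t ∈ Icc (y i - r) (y i + r)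
            · rw [Set.indicator_of_mem ht]
              have habs : |t - y i| ≤ r := by
                rw [abs_le]; constructor <;> [linarith [ht.1]; linarith [ht.2]]
              have := hline x hx i t habs
              rw [hf_def, Set.indicator_of_mem this]; exact le_rfl
            · simp [Set.indicator_of_notMem ht]
          calc ENNReal.ofReal (2*r) = volume (Icc (y i - r) (y i + r)) := by
                rw [Real.volume_Icc]; congr 1; ring
            _ = ∫⁻ t, (Icc (y i - r) (y i + r)).indicator (1 : ℝ → ℝ≥0∞) t :=
                (lintegral_indicator_one measurableSet_Icc).symm
            _ ≤ ∫⁻ t, f (update x i t) := lintegral_mono this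
        calc (ENNReal.ofReal (2*r)) ^ ((n : ℝ)/((n:ℝ)-1))
            = ((ENNReal.ofReal (2*r)) ^ ((1:ℝ)/((n:ℝ)-1))) ^ (n : ℕ) := by
              rw [← ENNReal.rpow_natCast ((ENNReal.ofReal (2*r)) ^ ((1:ℝ)/((n:ℝ)-1))) n,
                ← ENNReal.rpow_mul]
              congr 1; field_simp
          _ = ∏ _i : Fin n, (ENNReal.ofReal (2*r)) ^ ((1:ℝ)/((n:ℝ)-1)) := by
              rw [Finset.prod_const, Finset.card_univ, Fintype.card_fin]
          _ ≤ ∏ i, (∫⁻ t, f (update x i t)) ^ ((1:ℝ)/((n:ℝ) - 1)) :=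
              Finset.prod_le_prod' fun i _ => ENNReal.rpow_le_rpow (hfac i) hq0
      · rw [Set.indicator_of_notMem hx]; exact zero_le
    calc volume U * (ENNReal.ofReal (2*r)) ^ ((n : ℝ)/((n:ℝ)-1))
        = ∫⁻ x, U.indicator (fun _ => (ENNReal.ofReal (2*r)) ^ ((n : ℝ)/((n:ℝ)-1))) x := by
          rw [lintegral_indicator_const hU, mul_comm]
      _ ≤ _ := lintegral_mono hle
  calc volume U * (ENNReal.ofReal (2*r)) ^ ((n : ℝ)/((n:ℝ)-1))
      ≤ ∫⁻ x, ∏ i, (∫⁻ t, f (update x i t)) ^ ((1:ℝ)/((n:ℝ) - 1)) := hLB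
    _ ≤ (∫⁻ x, f x) ^ ((n:ℝ)/((n:ℝ)-1)) := key
    _ = (volume U + volume W) ^ ((n:ℝ)/((n:ℝ)-1)) := by rw [hRHS]

/-- cube isoperimetry: for an axis-aligned cube `C` in ℝⁿ and axis-disjoint
measurable subsets `S₁, S₂ ⊆ C` with `S₃ = C \ (S₁ ∪ S₂)`,
`vol(S₃) ≥ (c/(n log n)) · min{vol(S₁), vol(S₂)}` for an absolute constant `c > 0`. -/
theorem cube_isoperimetry :
    ∃ c > (0 : ℝ), ∀ (n : ℕ) (y : Fin n → ℝ) (r : ℝ), 0 < r →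
      ∀ S₁ S₂ : Set (Fin n → ℝ), MeasurableSet S₁ → MeasurableSet S₂ →
        S₁ ⊆ {x | ∀ i, |x i - y i| ≤ r} → S₂ ⊆ {x | ∀ i, |x i - y i| ≤ r} →
        AxisDisjoint S₁ S₂ →
        volume ({x : Fin n → ℝ | ∀ i, |x i - y i| ≤ r} \ (S₁ ∪ S₂)) ≥
          ENNReal.ofReal (c / (n * Real.log n)) * min (volume S₁) (volume S₂) := by
  classical
  refine ⟨1/10, by norm_num, ?_⟩
  intro n y r hr S₁ S₂ h1 h2 hS₁ hS₂ hAD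
  rcases lt_or_ge n 2 with hn | hn
  · -- n = 0 or 1 : the coefficient is zero
    have : (1/10 : ℝ) / (n * Real.log n) = 0 := by
      interval_cases n <;> simp
    rw [this]; simp
  -- main case n ≥ 2
  set C : Set (Fin n → ℝ) := {x | ∀ i, |x i - y i| ≤ r} with hC_def
  have hCpi : C = Set.pi univ (fun i => Icc (y i - r) (y i + r)) := by
    ext x
    simp only [hC_def, mem_setOf_eq, mem_pi, mem_univ, mem_Icc, forall_true_left, abs_le]
    constructor <;> (intro h i; have := h i; constructor <;> linarith [this.1, this.2])
  have hCmeas : MeasurableSet C := by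
    rw [hCpi]; exact MeasurableSet.univ_pi fun i => measurableSet_Icc
  set L : ℝ≥0∞ := ENNReal.ofReal (2*r) with hL_def
  have hCvol : volume C = L ^ n := by
    rw [hCpi, volume_pi_pi]
    have : ∀ i : Fin n, volume (Icc (y i - r) (y i + r)) = L := by
      intro i; rw [Real.volume_Icc]; congr 1; ring
    simp only [this, Finset.prod_const, Finset.card_univ, Fintype.card_fin]
  set S₃ : Set (Fin n → ℝ) := C \ (S₁ ∪ S₂) with hS₃_def
  have h3 : MeasurableSet S₃ := hCmeas.diff (h1.union h2)
  have hnpos : (0:Fin n → ℝ) = 0 := rfl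
  have hi0 : (0 : ℕ) < n := by omega
  -- S₁ and S₂ are disjoint
  have hd12 : Disjoint S₁ S₂ := by
    rw [Set.disjoint_left]
    intro p hp hp2
    exact hAD p hp p hp2 ⟨⟨0, hi0⟩, fun j _ => rfl⟩
  have hd13 : Disjoint S₁ S₃ := Disjoint.mono_left subset_union_left disjoint_sdiff_right
  have hd23 : Disjoint S₂ S₃ := Disjoint.mono_left subset_union_right disjoint_sdiff_right
  -- line conditions
  have hline1 : ∀ x ∈ S₁, ∀ i : Fin n, ∀ t : ℝ, |t - y i| ≤ r →
      Function.update x i t ∈ S₁ ∪ S₃ := by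
    intro x hx i t ht
    have hzC : Function.update x i t ∈ C := by
      intro j
      by_cases hji : j = i
      · subst hji; simpa using ht
      · rw [Function.update_of_ne hji]; exact hS₁ hx j
    by_cases hz1 : Function.update x i t ∈ S₁
    · exact Or.inl hz1
    by_cases hz2 : Function.update x i t ∈ S₂
    · exact (hAD x hx _ hz2 ⟨i, fun j hj => (Function.update_of_ne hj t x).symm⟩).elim
    · exact Or.inr ⟨hzC, fun h => h.elim hz1 hz2⟩
  have hline2 : ∀ x ∈ S₂, ∀ i : Fin n, ∀ t : ℝ, |t - y i| ≤ r →
      Function.update x i t ∈ S₂ ∪ S₃ := by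
    intro x hx i t ht
    have hzC : Function.update x i t ∈ C := by
      intro j
      by_cases hji : j = i
      · subst hji; simpa using ht
      · rw [Function.update_of_ne hji]; exact hS₂ hx j
    by_cases hz2 : Function.update x i t ∈ S₂
    · exact Or.inl hz2
    by_cases hz1 : Function.update x i t ∈ S₁
    · exact (hAD _ hz1 x hx ⟨i, fun j hj => Function.update_of_ne hj t x⟩).elim
    · exact Or.inr ⟨hzC, fun h => h.elim hz1 hz2⟩
  -- grid-lines bounds for S₁ and S₂
  have key1 := gridlines_bound hn y r hr S₁ S₃ h1 h3 hd13 hline1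
  have key2 := gridlines_bound hn y r hr S₂ S₃ h2 h3 hd23 hline2
  rw [← hL_def] at key1 key2
  set A := volume S₁ with hA_def
  set B := volume S₂ with hB_def
  set s := volume S₃ with hs_def
  show s ≥ ENNReal.ofReal (1/10 / (n * Real.log n)) * min A B
  by_contra hcon
  push_neg at hcon
  set k : ℝ := 1/10 / (n * Real.log n) with hk_def
  have hn1 : (1:ℝ) < n := by exact_mod_cast hn.trans_lt' one_lt_two
  have hlogn : 0 < Real.log n := Real.log_pos hn1
  have hk0 : 0 < k := by
    rw [hk_def]
    exact div_pos (by norm_num) (mul_pos (by positivity) hlogn)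
  set ε : ℝ≥0∞ := ENNReal.ofReal k with hε_def
  have hmin0 : min A B ≠ 0 := by
    intro h
    rw [h, mul_zero] at hcon
    exact (not_lt_of_ge (zero_le)) hcon
  have hA0 : A ≠ 0 := by
    intro h
    exact hmin0 (le_antisymm (le_trans (min_le_left _ _) h.le) (zero_le))
  have hB0 : B ≠ 0 := by
    intro h
    exact hmin0 (le_antisymm (le_trans (min_le_right _ _) h.le) (zero_le))
  have hLfin : L ≠ ⊤ := ENNReal.ofReal_ne_top
  have hL0 : L ≠ 0 := by
    rw [hL_def, Ne, ENNReal.ofReal_eq_zero, not_le]; linarith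
  have hLn_top : L ^ n ≠ ⊤ := ENNReal.pow_ne_top hLfin
  have hLn_0 : L ^ n ≠ 0 := pow_ne_zero n hL0
  have hAC : A ≤ L ^ n := hCvol ▸ measure_mono hS₁
  have hBC : B ≤ L ^ n := hCvol ▸ measure_mono hS₂
  have hAfin : A ≠ ⊤ := ne_top_of_le_ne_top hLn_top hAC
  have hBfin : B ≠ ⊤ := ne_top_of_le_ne_top hLn_top hBC
  have hsA : s ≤ ε * A :=
    le_of_lt (lt_of_lt_of_le hcon (mul_le_mul_right (min_le_left _ _) _))
  have hsB : s ≤ ε * B :=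
    le_of_lt (lt_of_lt_of_le hcon (mul_le_mul_right (min_le_right _ _) _))
  -- common step: from the grid-lines bound deduce L^n ≤ X * (1+ε)^n
  have step : ∀ X : ℝ≥0∞, X ≠ 0 → X ≠ ⊤ → s ≤ ε * X →
      X * L ^ ((n:ℝ)/((n:ℝ)-1)) ≤ (X + s) ^ ((n:ℝ)/((n:ℝ)-1)) →
      L ^ ((n:ℝ)) ≤ X * (1 + ε) ^ ((n:ℝ)) := by
    intro X hX0 hXtop hsX hkey
    have he0 : (0:ℝ) ≤ (n:ℝ) - 1 := by linarith
    have hpe : ((n:ℝ)/((n:ℝ)-1)) * ((n:ℝ)-1) = (n:ℝ) :=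
      div_mul_cancel₀ (n:ℝ) (by linarith)
    have h2 := ENNReal.rpow_le_rpow hkey he0
    rw [← ENNReal.rpow_mul (X + s), hpe,
      ENNReal.mul_rpow_of_nonneg X _ he0, ← ENNReal.rpow_mul L, hpe] at h2
    -- h2 : X ^ (n-1) * L ^ n ≤ (X + s) ^ n
    have hXs : X + s ≤ X * (1 + ε) := by
      calc X + s ≤ X + ε * X := add_le_add_right hsX X
        _ = X * (1 + ε) := by ring
    have h3' : (X + s) ^ ((n:ℝ)) ≤ X ^ (((n:ℝ)-1)) * (X * (1 + ε) ^ ((n:ℝ))) := by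
      calc (X + s) ^ ((n:ℝ)) ≤ (X * (1 + ε)) ^ ((n:ℝ)) :=
            ENNReal.rpow_le_rpow hXs (by positivity)
        _ = X ^ ((n:ℝ)) * (1 + ε) ^ ((n:ℝ)) :=
            ENNReal.mul_rpow_of_nonneg _ _ (by positivity)
        _ = X ^ (((n:ℝ)-1) + 1) * (1 + ε) ^ ((n:ℝ)) := by norm_num
        _ = X ^ (((n:ℝ)-1)) * (X * (1 + ε) ^ ((n:ℝ))) := by
            rw [ENNReal.rpow_add _ _ hX0 hXtop, ENNReal.rpow_one, mul_assoc]
    have hfinal : X ^ (((n:ℝ)-1)) * L ^ ((n:ℝ)) ≤ X ^ (((n:ℝ)-1)) * (X * (1 + ε) ^ ((n:ℝ))) :=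
      le_trans h2 h3'
    have hXe0 : X ^ (((n:ℝ)-1)) ≠ 0 :=
      (ENNReal.rpow_pos (zero_lt_iff.mpr hX0) hXtop).ne'
    have hXetop : X ^ (((n:ℝ)-1)) ≠ ⊤ := ENNReal.rpow_ne_top_of_nonneg he0 hXtop
    exact (ENNReal.mul_le_mul_iff_right hXe0 hXetop).mp hfinal
  have hA' : L ^ ((n:ℝ)) ≤ A * (1 + ε) ^ ((n:ℝ)) := step A hA0 hAfin hsA key1
  have hB' : L ^ ((n:ℝ)) ≤ B * (1 + ε) ^ ((n:ℝ)) := step B hB0 hBfin hsB key2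
  have hsum : A + B ≤ L ^ n := by
    rw [hA_def, hB_def, ← measure_union hd12 h2, ← hCvol]
    exact measure_mono (union_subset hS₁ hS₂)
  have hrn : L ^ ((n:ℝ)) = L ^ n := ENNReal.rpow_natCast L n
  have h2le : 2 ≤ (1 + ε) ^ ((n:ℝ)) := by
    have hdouble : L ^ n * 2 ≤ L ^ n * (1 + ε) ^ ((n:ℝ)) := by
      calc L ^ n * 2 = L ^ n + L ^ n := by ring
        _ ≤ A * (1 + ε) ^ ((n:ℝ)) + B * (1 + ε) ^ ((n:ℝ)) := by
            rw [← hrn]; exact add_le_add hA' hB'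
        _ = (A + B) * (1 + ε) ^ ((n:ℝ)) := by ring
        _ ≤ L ^ n * (1 + ε) ^ ((n:ℝ)) := mul_le_mul_left hsum _
    exact (ENNReal.mul_le_mul_iff_right hLn_0 hLn_top).mp hdouble
  -- the real-number estimate: (1+k)^n < 2
  have hreal : (1 + k) ^ n < 2 := by
    have hl2 : Real.log 2 ≤ Real.log n := by
      apply Real.log_le_log two_pos
      exact_mod_cast hn
    have hlog2 : (0.6931471803 : ℝ) < Real.log 2 := Real.log_two_gt_d9
    have h1k : 1 + k ≤ Real.exp k := by
      have := Real.add_one_le_exp k; linarith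
    have hnk : (n:ℝ) * k = (1/10) / Real.log n := by
      rw [hk_def]
      field_simp
    calc (1 + k) ^ n ≤ Real.exp k ^ n := pow_le_pow_left₀ (by linarith) h1k n
      _ = Real.exp ((n:ℝ) * k) := (Real.exp_nat_mul k n).symm
      _ = Real.exp ((1/10) / Real.log n) := by rw [hnk]
      _ ≤ Real.exp ((1/10) / Real.log 2) := by
          apply Real.exp_le_exp.mpr
          apply div_le_div_of_nonneg_left (by norm_num) (by linarith) hl2
      _ < 2 := by
          have hlt : (1/10 : ℝ) / Real.log 2 < Real.log 2 := by
            rw [div_lt_iff₀ (by linarith)]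
            nlinarith
          have h2' := Real.exp_lt_exp.mpr hlt
          rwa [Real.exp_log two_pos] at h2'
  have hcontra : (1 + ε) ^ ((n:ℝ)) < 2 := by
    have : (1 + ε) ^ ((n:ℝ)) = ENNReal.ofReal ((1 + k) ^ n) := by
      rw [hε_def, ← ENNReal.ofReal_one, ← ENNReal.ofReal_add zero_le_one hk0.le,
        ENNReal.rpow_natCast, ENNReal.ofReal_pow (by linarith)]
    rw [this]
    calc ENNReal.ofReal ((1 + k) ^ n) < ENNReal.ofReal 2 :=
          (ENNReal.ofReal_lt_ofReal_iff (by norm_num)).mpr hreal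
      _ = 2 := ENNReal.ofReal_ofNat 2
  exact absurd h2le (not_le.mpr hcontra)
end

section
/- For a lazy reversible Markov chain, the conductance of any set is at least the reciprocal of the mixing time: if the chain mixes to within total variation distance 1/4 of stationarity in t steps from any start, then φ ≥ c/t for an absolute constant c. -/
open MeasureTheory ProbabilityTheory
open scoped ENNReal

/-- The `t`-step kernel of a Markov chain with one-step kernel `P`. -/
noncomputable def iterKernel {Ω : Type} [MeasurableSpace Ω] (P : Kernel Ω Ω) :
    ℕ → Kernel Ω Ω
  | 0 => Kernel.id
  | k + 1 => (iterKernel P k).comp P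

instance iterKernel_markov {Ω : Type} [MeasurableSpace Ω] (P : Kernel Ω Ω)
    [IsMarkovKernel P] (k : ℕ) : IsMarkovKernel (iterKernel P k) := by
  induction k with
  | zero => simp only [iterKernel]; infer_instance
  | succ k ih => simp only [iterKernel]; infer_instance

lemma iterKernel_succ_left {Ω : Type} [MeasurableSpace Ω] (P : Kernel Ω Ω)
    [IsMarkovKernel P] (k : ℕ) :
    iterKernel P (k + 1) = P.comp (iterKernel P k) := by
  induction k with
  | zero => simp only [iterKernel, Kernel.id_comp, Kernel.comp_id]
  | succ k ih =>
      calc iterKernel P (k + 2) = (iterKernel P (k + 1)).comp P := rfl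
        _ = (P.comp (iterKernel P k)).comp P := by rw [ih]
        _ = P.comp ((iterKernel P k).comp P) := Kernel.comp_assoc _ _ _
        _ = P.comp (iterKernel P (k + 1)) := rfl

/-- for a lazy reversible Markov chain that mixes to within total variation
distance 1/4 of its stationary distribution in `t` steps from any start, the conductance
of every set `S` with `0 < Q(S) ≤ 1/2` is at least `c/t` for an absolute constant `c`. -/
theorem conductance_ge_inv_mixing_time :
    ∃ c > (0 : ℝ), ∀ (Ω : Type) (_ : MeasurableSpace Ω) (P : Kernel Ω Ω),
      IsMarkovKernel P → ∀ (Q : Measure Ω), IsProbabilityMeasure Q →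
      Q.bind P = Q →
      (∀ x, (1 : ℝ≥0∞) / 2 ≤ P x {x}) →
      (∀ A B : Set Ω, MeasurableSet A → MeasurableSet B →
        ∫⁻ x in A, P x B ∂Q = ∫⁻ x in B, P x A ∂Q) →
      ∀ t : ℕ, 1 ≤ t →
      (∀ (x : Ω) (A : Set Ω), MeasurableSet A →
        |((iterKernel P t x) A).toReal - (Q A).toReal| ≤ 1 / 4) →
      ∀ S : Set Ω, MeasurableSet S → 0 < Q S → Q S ≤ 1 / 2 →
        (∫⁻ x in S, P x Sᶜ ∂Q) / Q S ≥ ENNReal.ofReal (c / t) := by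
  refine ⟨1/4, by norm_num, ?_⟩
  intro Ω _ P hP Q hQ hstat _hlazy _hrev t ht hmix S hSm hS0 hS
  set F : ℝ≥0∞ := ∫⁻ x in S, P x Sᶜ ∂Q with hF
  set μ : ℕ → Measure Ω := fun k => (Q.restrict S).bind (iterKernel P k) with hμ
  have hμ_apply : ∀ k (A : Set Ω), MeasurableSet A →
      μ k A = ∫⁻ x in S, iterKernel P k x A ∂Q := fun k A hA => by
    rw [hμ, Measure.bind_apply hA (Kernel.measurable _).aemeasurable]
  have hμ_succ : ∀ k, μ (k + 1) = (μ k).bind P := by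
    intro k
    show (Q.restrict S).bind ⇑(iterKernel P (k + 1))
        = ((Q.restrict S).bind ⇑(iterKernel P k)).bind ⇑P
    rw [iterKernel_succ_left,
      Measure.bind_bind (Kernel.measurable _).aemeasurable (Kernel.measurable _).aemeasurable]
    congr 1
  -- μ k ≤ Q
  have hμ_le : ∀ k, μ k ≤ Q := by
    intro k
    induction k with
    | zero =>
        rw [Measure.le_iff]
        intro A hA
        rw [hμ_apply 0 A hA]
        simp only [iterKernel, Kernel.id_apply]
        calc ∫⁻ x in S, Measure.dirac x A ∂Q
            = ∫⁻ x in S, A.indicator 1 x ∂Q := by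
              refine lintegral_congr fun x => ?_
              rw [Measure.dirac_apply' x hA]
          _ = Q (A ∩ S) := by
              rw [lintegral_indicator_one hA, Measure.restrict_apply hA]
          _ ≤ Q A := measure_mono Set.inter_subset_left
    | succ k ih =>
        rw [Measure.le_iff]
        intro A hA
        rw [hμ_succ k]
        calc (μ k).bind (⇑P) A = ∫⁻ x, P x A ∂(μ k) :=
              Measure.bind_apply hA (Kernel.measurable _).aemeasurable
          _ ≤ ∫⁻ x, P x A ∂Q := lintegral_mono' ih le_rfl
          _ = Q.bind P A := (Measure.bind_apply hA (Kernel.measurable _).aemeasurable).symm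
          _ = Q A := by rw [hstat]
  -- escaping probability grows at most linearly
  have hμ_compl : ∀ k, μ k Sᶜ ≤ k * F := by
    intro k
    induction k with
    | zero =>
        have hz : μ 0 Sᶜ = 0 := by
          rw [hμ_apply 0 Sᶜ hSm.compl]
          simp only [iterKernel, Kernel.id_apply]
          calc ∫⁻ x in S, Measure.dirac x Sᶜ ∂Q
              = ∫⁻ x in S, Sᶜ.indicator 1 x ∂Q := by
                refine lintegral_congr fun x => ?_
                rw [Measure.dirac_apply' x hSm.compl]
            _ = Q (Sᶜ ∩ S) := by
                rw [lintegral_indicator_one hSm.compl, Measure.restrict_apply hSm.compl]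
            _ = 0 := by rw [Set.compl_inter_self, measure_empty]
        rw [hz]
        exact zero_le
    | succ k ih =>
        have h1 : μ (k + 1) Sᶜ = ∫⁻ x, P x Sᶜ ∂(μ k) := by
          rw [hμ_succ k]; exact Measure.bind_apply hSm.compl (Kernel.measurable _).aemeasurable
        have hsplit : ∫⁻ x, P x Sᶜ ∂(μ k)
            = ∫⁻ x in S, P x Sᶜ ∂(μ k) + ∫⁻ x in Sᶜ, P x Sᶜ ∂(μ k) := by
          rw [← lintegral_add_compl _ hSm]
        have hterm1 : ∫⁻ x in S, P x Sᶜ ∂(μ k) ≤ F := by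
          rw [hF]
          exact lintegral_mono' (Measure.restrict_mono le_rfl (hμ_le k)) le_rfl
        have hterm2 : ∫⁻ x in Sᶜ, P x Sᶜ ∂(μ k) ≤ μ k Sᶜ := by
          calc ∫⁻ x in Sᶜ, P x Sᶜ ∂(μ k) ≤ ∫⁻ _ in Sᶜ, 1 ∂(μ k) :=
                lintegral_mono fun x => prob_le_one
            _ = μ k Sᶜ := by rw [setLIntegral_one]
        calc μ (k + 1) Sᶜ ≤ F + μ k Sᶜ := by
              rw [h1, hsplit]; exact add_le_add hterm1 hterm2
          _ ≤ F + k * F := add_le_add le_rfl ih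
          _ = (k + 1 : ℕ) * F := by push_cast; ring
  -- lower bound on μ t Sᶜ from mixing
  have hQSc : (1 : ℝ) / 2 ≤ (Q Sᶜ).toReal := by
    have h1 : Q Sᶜ = 1 - Q S := prob_compl_eq_one_sub hSm
    have hQS1 : (Q S).toReal ≤ 1 / 2 := by
      have := ENNReal.toReal_mono (by norm_num) hS
      simpa [ENNReal.toReal_div] using this
    rw [h1, ENNReal.toReal_sub_of_le prob_le_one ENNReal.one_ne_top]
    simp only [ENNReal.toReal_one]
    linarith
  have hlow : ∀ x, ENNReal.ofReal (1/4 : ℝ) ≤ iterKernel P t x Sᶜ := by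
    intro x
    have h := hmix x Sᶜ hSm.compl
    have habs := abs_le.mp h
    have : (1 : ℝ) / 4 ≤ (iterKernel P t x Sᶜ).toReal := by linarith [habs.1]
    exact ENNReal.ofReal_le_of_le_toReal this
  have hμt : ENNReal.ofReal (1/4 : ℝ) * Q S ≤ μ t Sᶜ := by
    rw [hμ_apply t Sᶜ hSm.compl]
    calc ENNReal.ofReal (1/4 : ℝ) * Q S
        = ∫⁻ _ in S, ENNReal.ofReal (1/4 : ℝ) ∂Q := by
          rw [setLIntegral_const]
      _ ≤ ∫⁻ x in S, iterKernel P t x Sᶜ ∂Q := lintegral_mono fun x => hlow x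
  -- combine
  have hkey : ENNReal.ofReal (1/4 : ℝ) * Q S ≤ t * F := le_trans hμt (hμ_compl t)
  have ht0 : (t : ℝ≥0∞) ≠ 0 := Nat.cast_ne_zero.mpr (Nat.one_le_iff_ne_zero.mp ht)
  have htop : (t : ℝ≥0∞) ≠ ⊤ := ENNReal.natCast_ne_top t
  have hQStop : Q S ≠ ⊤ := (lt_of_le_of_lt prob_le_one ENNReal.one_lt_top).ne
  rw [ge_iff_le, ENNReal.le_div_iff_mul_le (Or.inl hS0.ne') (Or.inl hQStop)]
  have hofReal : ENNReal.ofReal ((1/4 : ℝ) / t) = ENNReal.ofReal (1/4 : ℝ) / t := by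
    rw [ENNReal.ofReal_div_of_pos (by exact_mod_cast ht), ENNReal.ofReal_natCast]
  rw [hofReal]
  have hrw : ENNReal.ofReal (1/4 : ℝ) / t * Q S
      = ENNReal.ofReal (1/4 : ℝ) * Q S / t := by
    simp only [div_eq_mul_inv]; ring
  rw [hrw, ENNReal.div_le_iff ht0 htop]
  calc ENNReal.ofReal (1/4 : ℝ) * Q S ≤ t * F := hkey
    _ = F * t := mul_comm _ _
end

section
/- Let K be a convex body in ℝⁿ, S₁ ⊆ K measurable, S₂ = K ∖ S₁, and let P_x denote the one-step transition kernel of Coordinate Hit-and-Run on K. Define S₁' = {x ∈ S₁ : P_x(S₂) < 1/(2n)} and S₂' = {x ∈ S₂ : P_x(S₁) < 1/(2n)}. Then S₁' and S₂' are axis-disjoint. -/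
open MeasureTheory Set
open scoped ENNReal

/-- One-step transition probability of Coordinate Hit-and-Run on `K` from `x` into `S`:
pick a uniform coordinate direction, then a uniform point of the chord through `x`. -/
noncomputable def charP (n : ℕ) (K S : Set (Fin n → ℝ)) (x : Fin n → ℝ) : ℝ≥0∞ :=
  (n : ℝ≥0∞)⁻¹ * ∑ j : Fin n,
    volume {t : ℝ | x + t • (Pi.single j 1 : Fin n → ℝ) ∈ S} /
      volume {t : ℝ | x + t • (Pi.single j 1 : Fin n → ℝ) ∈ K}

/-- for a convex body `K`, a measurable `S₁ ⊆ K` with complement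
`S₂ = K \ S₁`, the sets of points of `S₁` (resp. `S₂`) whose one-step CHAR escape
probability into the other side is `< 1/(2n)` are axis-disjoint. -/
theorem char_low_escape_sets_axisDisjoint (n : ℕ) (K : Set (Fin n → ℝ))
    (hconv : Convex ℝ K) (hcomp : IsCompact K) (hint : (interior K).Nonempty)
    (S₁ : Set (Fin n → ℝ)) (hS₁ : MeasurableSet S₁) (hS₁K : S₁ ⊆ K)
    (S₂ : Set (Fin n → ℝ)) (hS₂ : S₂ = K \ S₁) :
    AxisDisjoint {x ∈ S₁ | charP n K S₂ x < (2 * (n : ℝ≥0∞))⁻¹}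
      {x ∈ S₂ | charP n K S₁ x < (2 * (n : ℝ≥0∞))⁻¹} := by
  intro p hp q hq h
  obtain ⟨i, hpq⟩ := h
  obtain ⟨hpS₁, hpP⟩ := hp
  obtain ⟨hqS₂, hqP⟩ := hq
  subst hS₂
  have hpK : p ∈ K := hS₁K hpS₁
  have hqK : q ∈ K := hqS₂.1
  have hn0 : (n : ℝ≥0∞) ≠ 0 := Nat.cast_ne_zero.mpr i.pos.ne'
  set d : ℝ := p i - q i with hd
  have hdne : d ≠ 0 := by
    intro h0
    apply hqS₂.2
    have hpqeq : p = q := funext fun j => by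
      by_cases hj : j = i
      · subst hj; have := sub_eq_zero.mp h0; linarith
      · exact hpq j hj
    exact hpqeq ▸ hpS₁
  have key : ∀ t : ℝ, p + t • (Pi.single i 1 : Fin n → ℝ)
      = q + (t + d) • (Pi.single i 1 : Fin n → ℝ) := by
    intro t; funext j
    by_cases hj : j = i
    · subst hj
      simp [hd, Pi.single_apply]
      try ring
    · simp [Pi.single_apply, hj, hpq j hj]
  have hvol : ∀ S : Set (Fin n → ℝ),
      volume {t : ℝ | p + t • (Pi.single i 1 : Fin n → ℝ) ∈ S}
        = volume {t : ℝ | q + t • (Pi.single i 1 : Fin n → ℝ) ∈ S} := by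
    intro S
    have hset : {t : ℝ | p + t • (Pi.single i 1 : Fin n → ℝ) ∈ S}
        = (fun t => t + d) ⁻¹' {t : ℝ | q + t • (Pi.single i 1 : Fin n → ℝ) ∈ S} := by
      ext t; simp [Set.mem_preimage, key t]
    rw [hset, measure_preimage_add_right]
  set A : ℝ≥0∞ := volume {t : ℝ | p + t • (Pi.single i 1 : Fin n → ℝ) ∈ S₁} with hA
  set B : ℝ≥0∞ := volume {t : ℝ | p + t • (Pi.single i 1 : Fin n → ℝ) ∈ K \ S₁} with hB
  set C : ℝ≥0∞ := volume {t : ℝ | p + t • (Pi.single i 1 : Fin n → ℝ) ∈ K} with hC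
  have hC_le : C ≤ A + B := by
    have hsub : {t : ℝ | p + t • (Pi.single i 1 : Fin n → ℝ) ∈ K}
        ⊆ {t : ℝ | p + t • (Pi.single i 1 : Fin n → ℝ) ∈ S₁}
          ∪ {t : ℝ | p + t • (Pi.single i 1 : Fin n → ℝ) ∈ K \ S₁} := by
      intro t ht
      by_cases hts : p + t • (Pi.single i 1 : Fin n → ℝ) ∈ S₁
      · exact Or.inl hts
      · exact Or.inr ⟨ht, hts⟩
    exact le_trans (measure_mono hsub) (measure_union_le _ _)
  have hqe : q = p + (-d) • (Pi.single i 1 : Fin n → ℝ) := by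
    funext j
    by_cases hj : j = i
    · subst hj; simp [hd, Pi.single_apply]; try ring
    · simp [Pi.single_apply, hj, hpq j hj]
  have hC_pos : 0 < C := by
    have hsub : uIcc (0:ℝ) (-d) ⊆ {t : ℝ | p + t • (Pi.single i 1 : Fin n → ℝ) ∈ K} := by
      intro t ht
      rw [← segment_eq_uIcc] at ht
      obtain ⟨a, b, ha, hb, hab, rfl⟩ := ht
      show p + (a • (0:ℝ) + b • (-d)) • (Pi.single i 1 : Fin n → ℝ) ∈ K
      have heq : p + (a • (0:ℝ) + b • (-d)) • (Pi.single i 1 : Fin n → ℝ) = a • p + b • q := by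
        rw [hqe]
        match_scalars <;> (try ring_nf) <;> (try simp only [smul_eq_mul]) <;> nlinarith [hab]
      rw [heq]
      exact hconv hpK hqK ha hb hab
    have hpos : (0:ℝ≥0∞) < volume (uIcc (0:ℝ) (-d)) := by
      rw [Real.volume_interval]
      simp [ENNReal.ofReal_pos, abs_pos, hdne]
    exact lt_of_lt_of_le hpos (measure_mono hsub)
  have hC_top : C ≠ ⊤ := by
    have hJ : IsCompact ((fun x : Fin n → ℝ => x i) '' K) := hcomp.image (continuous_apply i)
    have hsub2 : {t : ℝ | p + t • (Pi.single i 1 : Fin n → ℝ) ∈ K} ⊆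
        (fun t : ℝ => t + p i) ⁻¹' ((fun x : Fin n → ℝ => x i) '' K) := by
      intro t ht
      refine ⟨p + t • (Pi.single i 1 : Fin n → ℝ), ht, ?_⟩
      simp [Pi.single_apply]
      try ring
    have hv : volume ((fun t : ℝ => t + p i) ⁻¹' ((fun x : Fin n → ℝ => x i) '' K))
        = volume ((fun x : Fin n → ℝ => x i) '' K) := measure_preimage_add_right _ _ _
    exact ne_top_of_le_ne_top (by rw [hv]; exact hJ.measure_lt_top.ne) (measure_mono hsub2)
  have h1 : (n : ℝ≥0∞)⁻¹ * (B / C) ≤ charP n K (K \ S₁) p := by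
    unfold charP
    refine mul_le_mul_right ?_ _
    exact Finset.single_le_sum
      (f := fun j : Fin n => volume {t : ℝ | p + t • (Pi.single j 1 : Fin n → ℝ) ∈ K \ S₁} /
        volume {t : ℝ | p + t • (Pi.single j 1 : Fin n → ℝ) ∈ K})
      (fun j _ => zero_le) (Finset.mem_univ i)
  have h2 : (n : ℝ≥0∞)⁻¹ * (A / C) ≤ charP n K S₁ q := by
    unfold charP
    refine mul_le_mul_right ?_ _
    have hle := Finset.single_le_sum
      (f := fun j : Fin n => volume {t : ℝ | q + t • (Pi.single j 1 : Fin n → ℝ) ∈ S₁} /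
        volume {t : ℝ | q + t • (Pi.single j 1 : Fin n → ℝ) ∈ K})
      (fun j _ => zero_le) (Finset.mem_univ i)
    refine le_trans (le_of_eq ?_) hle
    rw [hA, hC, hvol S₁, hvol K]
  have hsum : (n : ℝ≥0∞)⁻¹ ≤ charP n K S₁ q + charP n K (K \ S₁) p := by
    have hdiv : (1 : ℝ≥0∞) ≤ (A + B) / C := by
      rw [← ENNReal.div_self hC_pos.ne' hC_top]
      exact ENNReal.div_le_div_right hC_le C
    calc (n : ℝ≥0∞)⁻¹ = (n : ℝ≥0∞)⁻¹ * 1 := (mul_one _).symm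
      _ ≤ (n : ℝ≥0∞)⁻¹ * ((A + B) / C) := mul_le_mul_right hdiv _
      _ = (n : ℝ≥0∞)⁻¹ * (A / C) + (n : ℝ≥0∞)⁻¹ * (B / C) := by
          rw [← ENNReal.div_add_div_same, mul_add]
      _ ≤ charP n K S₁ q + charP n K (K \ S₁) p := add_le_add h2 h1
  have hlt : charP n K S₁ q + charP n K (K \ S₁) p < (n : ℝ≥0∞)⁻¹ := by
    have hadd := ENNReal.add_lt_add hqP hpP
    have heq2 : (2 * (n : ℝ≥0∞))⁻¹ + (2 * (n : ℝ≥0∞))⁻¹ = (n : ℝ≥0∞)⁻¹ := by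
      rw [ENNReal.mul_inv (Or.inl two_ne_zero) (Or.inl ENNReal.ofNat_ne_top)]
      rw [← two_mul, ← mul_assoc, ENNReal.mul_inv_cancel two_ne_zero ENNReal.ofNat_ne_top, one_mul]
    rwa [heq2] at hadd
  exact absurd (lt_of_le_of_lt hsum hlt) (lt_irrefl _)
end
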